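/- Let G be a group satisfying: (i) G is torsion-free (no non-identity element has finite order), and (ii) any two commuting non-identity elements of G are integer powers of a common element, i.e. for all a, b ∈ G with a ≠ 1, b ≠ 1 and a·b = b·a there exist c ∈ G and integers m, n with a = c^m and b = c^n. Then for any two nontrivial normal subgroups Φ and Θ of G, the intersection Φ ∩ Θ is nontrivial (contains a non-identity element). -/

import Mathlib

/-- A monoid is torsion-free if no non-identity element has finite order
(the definition `Monoid.IsTorsionFree` of Mathlib as of December 2024). -/
def Monoid.IsTorsionFree (G : Type*) [Monoid G] : Prop :=
  ∀ g : G, g ≠ 1 → ¬IsOfFinOrder g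

lemma tf_zpow {G : Type*} [Group G] (htf : Monoid.IsTorsionFree G)
    {a : G} (ha : a ≠ 1) {n : ℤ} (hn : n ≠ 0) : a ^ n ≠ 1 := by
  intro h
  have := htf a ha
  rw [isOfFinOrder_iff_zpow_eq_one] at this
  exact this ⟨n, hn, h⟩

/-- **Group-theoretic core of Lemma 2.2.**
Let `G` be a torsion-free group in which any two commuting non-identity elements are integer
powers of a common element. Then any two nontrivial normal subgroups of `G` intersect
nontrivially. -/
theorem normal_inter_nontrivial
    {G : Type*} [Group G]
    (htf : Monoid.IsTorsionFree G)
    (hcomm : ∀ a b : G, a ≠ 1 → b ≠ 1 → a * b = b * a →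
      ∃ c : G, ∃ m n : ℤ, a = c ^ m ∧ b = c ^ n)
    (Φ Θ : Subgroup G) (hΦn : Φ.Normal) (hΘn : Θ.Normal)
    (hΦ : Φ ≠ ⊥) (hΘ : Θ ≠ ⊥) :
    ∃ g : G, g ∈ Φ ⊓ Θ ∧ g ≠ 1 := by
  obtain ⟨⟨a, haΦ⟩, ha⟩ := Subgroup.ne_bot_iff_exists_ne_one.mp hΦ
  obtain ⟨⟨b, hbΘ⟩, hb⟩ := Subgroup.ne_bot_iff_exists_ne_one.mp hΘ
  simp only [ne_eq, Subgroup.mk_eq_one] at ha hb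
  -- consider the commutator a * b * a⁻¹ * b⁻¹
  by_cases hc : a * b * a⁻¹ * b⁻¹ = 1
  · -- a and b commute
    have hab : a * b = b * a := by
      have h1 : a * b * a⁻¹ = b := by rwa [mul_inv_eq_one] at hc
      exact mul_inv_eq_iff_eq_mul.mp h1
    obtain ⟨c, m, n, ham, hbn⟩ := hcomm a b ha hb hab
    have hn : n ≠ 0 := by rintro rfl; simp at hbn; exact hb hbn
    refine ⟨a ^ n, ⟨Φ.zpow_mem haΦ n, ?_⟩, tf_zpow htf ha hn⟩
    have : a ^ n = b ^ m := by
      rw [ham, hbn, ← zpow_mul, ← zpow_mul, mul_comm]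
    rw [this]
    exact Θ.zpow_mem hbΘ m
  · refine ⟨a * b * a⁻¹ * b⁻¹, ⟨?_, ?_⟩, hc⟩
    · have h1 : b * a⁻¹ * b⁻¹ ∈ Φ := hΦn.conj_mem a⁻¹ (Φ.inv_mem haΦ) b
      have := Φ.mul_mem haΦ h1
      simpa [mul_assoc] using this
    · have h1 : a * b * a⁻¹ ∈ Θ := hΘn.conj_mem b hbΘ a
      exact Θ.mul_mem h1 (Θ.inv_mem hbΘ)
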